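/- Let m ≥ 2 and let a₀,…,a_m, b₁,…,b_m be complex numbers with Re(b_i) > Re(a_i) > 0 for i = 1,…,m and Re(b₁ − a₁) ≥ Re(a₀). Then the multiple integral J_m = ∫_{[0,1]^m} (∏_{i=1}^m x_i^{a_i−1}(1−x_i)^{b_i−a_i−1}) / (1 − (1 − (⋯(1 − x_m)x_{m−1}⋯))x₁)^{a₀} dx₁⋯dx_m converges absolutely. -/

import Mathlib

open MeasureTheory

/-- Pochhammer symbol `(x)_k = x(x+1)⋯(x+k-1)`. -/
noncomputable def poch (x : ℂ) (k : ℕ) : ℂ := ∏ i ∈ Finset.range k, (x + (i : ℂ))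

/-- Generalized hypergeometric series with upper parameters `α`, lower parameters `β`. -/
noncomputable def hyp (α β : List ℂ) (z : ℂ) : ℂ :=
  ∑' k : ℕ, ((α.map fun w => poch w k).prod /
    ((β.map fun w => poch w k).prod * (Nat.factorial k : ℂ))) * z ^ k

/-- Nested expression: `nestR [x₁,…,x_m] = 1 - (1 - (⋯(1 - x_m)x_{m-1}⋯))x₁`. -/
def nestR : List ℝ → ℝ
  | [] => 1
  | t :: rest => 1 - nestR rest * t

/-- The Vasilyev-type integral `J_m(a₀,…,a_m; b₁,…,b_m; z)`. -/
noncomputable def Jint (m : ℕ) (a b : ℕ → ℂ) (z : ℂ) : ℂ :=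
  ∫ x in Set.univ.pi fun _ : Fin m => Set.Ioo (0:ℝ) 1,
    (∏ i : Fin m, ((x i : ℂ) ^ (a (i.1+1) - 1) *
        ((1 - x i : ℝ) : ℂ) ^ (b (i.1+1) - a (i.1+1) - 1))) /
      ((1 - ((nestR (List.ofFn x).tail * (List.ofFn x).headI : ℝ) : ℂ) * z) ^ (a 0))


lemma nestR_mem_Icc {l : List ℝ} (h : ∀ t ∈ l, t ∈ Set.Icc (0:ℝ) 1) :
    nestR l ∈ Set.Icc (0:ℝ) 1 := by
  induction l with
  | nil => simp [nestR]
  | cons t r ih =>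
    have ht := h t (by simp)
    have hr := ih (fun u hu => h u (List.mem_cons_of_mem _ hu))
    simp only [Set.mem_Icc, nestR] at *
    constructor <;> nlinarith [hr.1, hr.2, ht.1, ht.2]

lemma prod_one_sub_mem {l : List ℝ} (h : ∀ t ∈ l, t ∈ Set.Icc (0:ℝ) 1) :
    (l.map (fun t => 1 - t)).prod ∈ Set.Icc (0:ℝ) 1 := by
  induction l with
  | nil => simp
  | cons t r ih =>
    have ht := h t (by simp)
    have hr := ih (fun u hu => h u (List.mem_cons_of_mem _ hu))
    simp only [Set.mem_Icc, List.map_cons, List.prod_cons] at *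
    constructor <;> nlinarith [hr.1, hr.2, ht.1, ht.2]

lemma nestR_ge_prod {l : List ℝ} (h : ∀ t ∈ l, t ∈ Set.Icc (0:ℝ) 1) :
    (l.map (fun t => 1 - t)).prod ≤ nestR l := by
  induction l with
  | nil => simp [nestR]
  | cons t r ih =>
    have ht := h t (by simp)
    have hr := ih (fun u hu => h u (List.mem_cons_of_mem _ hu))
    have h1 := nestR_mem_Icc (fun u hu => h u (List.mem_cons_of_mem _ hu))
    have h2 := prod_one_sub_mem (fun u hu => h u (List.mem_cons_of_mem _ hu))
    simp only [Set.mem_Icc, List.map_cons, List.prod_cons, nestR] at *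
    nlinarith [h1.1, h1.2, h2.1, h2.2, ht.1, ht.2]

lemma nestR_ge_key {s t : ℝ} {r : List ℝ} (hs : s ∈ Set.Icc (0:ℝ) 1)
    (ht : t ∈ Set.Icc (0:ℝ) 1) (h : ∀ u ∈ r, u ∈ Set.Icc (0:ℝ) 1) :
    s * t * (r.map (fun u => 1 - u)).prod ≤ nestR (s :: t :: r) := by
  have h1 := nestR_ge_prod h
  have h2 := nestR_mem_Icc h
  have h3 := prod_one_sub_mem h
  simp only [Set.mem_Icc, nestR] at *
  have key : s * t * (List.map (fun u => 1 - u) r).prod ≤ s * t * nestR r :=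
    mul_le_mul_of_nonneg_left h1 (mul_nonneg hs.1 ht.1)
  nlinarith [key, hs.2, h2.1, ht.1, hs.1]

lemma continuous_nestR_ofFn (m : ℕ) :
    Continuous fun x : Fin m → ℝ => nestR (List.ofFn x) := by
  induction m with
  | zero => simpa [List.ofFn_zero, nestR] using continuous_const
  | succ n ih =>
    simp only [List.ofFn_succ, nestR]
    exact continuous_const.sub
      ((ih.comp (continuous_pi fun i => continuous_apply i.succ)).mul (continuous_apply 0))

lemma beta_integrableOn {p q : ℝ} (hp : 0 < p) (hq : 0 < q) :
    IntegrableOn (fun t : ℝ => t ^ (p-1) * (1-t) ^ (q-1)) (Set.Ioo 0 1) := by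
  have h := Complex.betaIntegral_convergent (u := (p:ℂ)) (v := (q:ℂ)) (by simpa) (by simpa)
  have h2 : IntegrableOn (fun x : ℝ => (x : ℂ) ^ ((p:ℂ) - 1) * (1 - (x : ℂ)) ^ ((q:ℂ) - 1))
      (Set.Ioc 0 1) := by
    simpa [intervalIntegrable_iff_integrableOn_Ioc_of_le] using h
  have h2n : IntegrableOn (fun x : ℝ => ‖(x : ℂ) ^ ((p:ℂ) - 1) * (1 - (x : ℂ)) ^ ((q:ℂ) - 1)‖)
      (Set.Ioc 0 1) := h2.norm
  have h3 := h2n.mono_set Set.Ioo_subset_Ioc_self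
  refine h3.congr_fun (fun t htm => ?_) measurableSet_Ioo
  obtain ⟨ht0, ht1⟩ := htm
  beta_reduce
  rw [norm_mul]
  have e1 : (1 : ℂ) - (t:ℂ) = ((1 - t : ℝ) : ℂ) := by push_cast; ring
  rw [e1, Complex.norm_cpow_eq_rpow_re_of_pos ht0, Complex.norm_cpow_eq_rpow_re_of_pos (by linarith)]
  norm_num

/-- absolute convergence of the Vasilyev-type integral `J_m` at `z = 1`. -/
theorem J_integrable (m : ℕ) (hm : 2 ≤ m) (a b : ℕ → ℂ)
    (hab : ∀ i : ℕ, 1 ≤ i → i ≤ m → (a i).re < (b i).re ∧ 0 < (a i).re)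
    (h1 : (a 0).re ≤ (b 1 - a 1).re) :
    IntegrableOn (fun x : Fin m → ℝ =>
        (∏ i : Fin m, ((x i : ℂ) ^ (a (i.1+1) - 1) *
            ((1 - x i : ℝ) : ℂ) ^ (b (i.1+1) - a (i.1+1) - 1))) /
          ((1 - ((nestR (List.ofFn x).tail * (List.ofFn x).headI : ℝ) : ℂ)) ^ (a 0)))
      (Set.univ.pi fun _ : Fin m => Set.Ioo (0:ℝ) 1) := by
  obtain ⟨n, rfl⟩ : ∃ n, m = n + 2 := ⟨m - 2, by omega⟩
  have key : ∀ x : Fin (n+2) → ℝ,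
      (1 - ((nestR (List.ofFn x).tail * (List.ofFn x).headI : ℝ) : ℂ))
        = ((nestR (List.ofFn x) : ℝ) : ℂ) := by
    intro x
    simp only [List.ofFn_succ, List.tail_cons, List.headI_cons, nestR]
    push_cast
    ring
  simp only [key]
  -- parameters
  set α : Fin (n+2) → ℝ := fun i => (a (i.1+1)).re with hαdef
  set β : Fin (n+2) → ℝ := fun i => (b (i.1+1)).re - (a (i.1+1)).re with hβdef
  have hα0 : ∀ i, 0 < α i := fun i => (hab (i.1+1) (by omega) (by omega)).2
  have hβ0 : ∀ i, 0 < β i := fun i => sub_pos.2 (hab (i.1+1) (by omega) (by omega)).1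
  set c : ℝ := (a 0).re with hcdef
  set d : ℝ := max c 0 with hddef
  have hd0 : 0 ≤ d := le_max_right _ _
  have hcd : c ≤ d := le_max_left _ _
  have hdβ : d ≤ β 0 := by
    refine max_le ?_ (hβ0 0).le
    simpa [hβdef, Complex.sub_re] using h1
  set M : ℝ := Finset.univ.inf' Finset.univ_nonempty (fun i : Fin (n+2) => min (α i) (β i))
    with hMdef
  have hM0 : 0 < M := by
    rw [hMdef, Finset.lt_inf'_iff]
    exact fun i _ => lt_min (hα0 i) (hβ0 i)
  have hMα : ∀ i, M ≤ α i := fun i =>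
    le_trans (Finset.inf'_le _ (Finset.mem_univ i)) (min_le_left _ _)
  have hMβ : ∀ i, M ≤ β i := fun i =>
    le_trans (Finset.inf'_le _ (Finset.mem_univ i)) (min_le_right _ _)
  set ε : ℝ := min (M / (2*d+1)) 1 with hεdef
  have hε0 : 0 < ε := lt_min (div_pos hM0 (by linarith)) one_pos
  have hε1 : ε ≤ 1 := min_le_right _ _
  have hεd0 : 0 ≤ ε * d := mul_nonneg hε0.le hd0
  have h1εd0 : 0 ≤ (1-ε) * d := mul_nonneg (by linarith) hd0
  have hεd : ε * d < M := by
    have h2 : ε ≤ M / (2*d+1) := min_le_left _ _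
    calc ε * d ≤ (M / (2*d+1)) * d := mul_le_mul_of_nonneg_right h2 hd0
    _ < M := by
        rw [div_mul_eq_mul_div, div_lt_iff₀ (by linarith)]
        nlinarith
  -- exponents
  set p : Fin (n+2) → ℝ := fun i => α i - ε * d with hpdef
  set e : Fin (n+2) → ℝ := fun i => if i = 0 then (1-ε)*d else ε*d with hedef
  set q : Fin (n+2) → ℝ := fun i => β i - e i with hqdef
  have hp0 : ∀ i, 0 < p i := fun i => by
    have := hMα i; simp only [hpdef]; linarith
  have he0 : ∀ i, 0 ≤ e i := fun i => by
    simp only [hedef]; split <;> assumption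
  have hq0 : ∀ i, 0 < q i := by
    intro i
    simp only [hqdef, hedef]
    split
    · rename_i h0
      subst h0
      rcases eq_or_lt_of_le hd0 with hcase | hcase
      · rw [← hcase]; simpa using hβ0 0
      · nlinarith [hβ0 0, mul_pos hε0 hcase, hdβ]
    · have := hMβ i; linarith
  set h : Fin (n+2) → ℝ → ℝ := fun i t => t ^ (p i - 1) * (1-t) ^ (q i - 1) with hhdef
  set g : (Fin (n+2) → ℝ) → ℝ :=
    fun x => ∏ i, (Set.Ioo (0:ℝ) 1).indicator (h i) (x i) with hgdef
  have hg : Integrable g := by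
    refine Integrable.fintype_prod fun i => ?_
    exact (integrable_indicator_iff measurableSet_Ioo).2 (beta_integrableOn (hp0 i) (hq0 i))
  set S := Set.univ.pi fun _ : Fin (n+2) => Set.Ioo (0:ℝ) 1 with hSdef
  have hSm : MeasurableSet S := MeasurableSet.univ_pi (fun _ => measurableSet_Ioo)
  -- basic positivity of nestR on S
  have hxIcc : ∀ x ∈ S, ∀ u ∈ List.ofFn x, u ∈ Set.Icc (0:ℝ) 1 := by
    intro x hx u hu
    rw [List.mem_ofFn] at hu
    obtain ⟨i, rfl⟩ := hu
    have hxi : x i ∈ Set.Ioo (0:ℝ) 1 := hx i (Set.mem_univ i)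
    exact ⟨hxi.1.le, hxi.2.le⟩
  have hQlb : ∀ x ∈ S, 1 - x 0 ≤ nestR (List.ofFn x) := by
    intro x hx
    rw [List.ofFn_succ]
    have hnt := nestR_mem_Icc (l := List.ofFn fun i : Fin (n+1) => x i.succ) (by
      intro u hu
      have : u ∈ List.ofFn x := by
        rw [List.mem_ofFn] at hu ⊢
        obtain ⟨i, rfl⟩ := hu
        exact ⟨i.succ, rfl⟩
      exact hxIcc x hx u this)
    have hx0 : x 0 ∈ Set.Ioo (0:ℝ) 1 := hx 0 (Set.mem_univ 0)
    show 1 - x 0 ≤ 1 - nestR _ * x 0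
    nlinarith [hnt.1, hnt.2, hx0.1, hx0.2]
  have hQpos : ∀ x ∈ S, 0 < nestR (List.ofFn x) := by
    intro x hx
    have hx0 : x 0 ∈ Set.Ioo (0:ℝ) 1 := hx 0 (Set.mem_univ 0)
    have := hQlb x hx
    linarith [hx0.2]
  have hQle1 : ∀ x ∈ S, nestR (List.ofFn x) ≤ 1 :=
    fun x hx => (nestR_mem_Icc (hxIcc x hx)).2
  -- measurability
  have hcont : ContinuousOn (fun x : Fin (n+2) → ℝ =>
      (∏ i : Fin (n+2), ((x i : ℂ) ^ (a (i.1+1) - 1) *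
          ((1 - x i : ℝ) : ℂ) ^ (b (i.1+1) - a (i.1+1) - 1))) /
        (((nestR (List.ofFn x) : ℝ) : ℂ) ^ (a 0))) S := by
    apply ContinuousOn.div
    · apply continuousOn_finset_prod
      intro i _
      apply ContinuousOn.mul
      · exact (Complex.continuous_ofReal.comp (continuous_apply i)).continuousOn.cpow_const
          (fun x hx => Complex.ofReal_mem_slitPlane.2 (hx i (Set.mem_univ i)).1)
      · exact (Complex.continuous_ofReal.comp
          (continuous_const.sub (continuous_apply i))).continuousOn.cpow_const
          (fun x hx => Complex.ofReal_mem_slitPlane.2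
            (show (0:ℝ) < 1 - x i by linarith [(hx i (Set.mem_univ i)).2]))
    · exact (Complex.continuous_ofReal.comp (continuous_nestR_ofFn (n+2))).continuousOn.cpow_const
        (fun x hx => Complex.ofReal_mem_slitPlane.2 (hQpos x hx))
    · intro x hx
      rw [Ne, Complex.cpow_eq_zero_iff]
      push_neg
      intro habs
      exact absurd habs (by exact_mod_cast (hQpos x hx).ne')
  refine Integrable.mono' hg.integrableOn (hcont.aestronglyMeasurable hSm) ?_
  rw [ae_restrict_iff' hSm]
  filter_upwards with x hx
  have ht : ∀ i, x i ∈ Set.Ioo (0:ℝ) 1 := fun i => hx i (Set.mem_univ i)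
  have ht0 : ∀ i, 0 < x i := fun i => (ht i).1
  have ht1 : ∀ i, x i < 1 := fun i => (ht i).2
  have ht1' : ∀ i, 0 < 1 - x i := fun i => by linarith [ht1 i]
  set Q : ℝ := nestR (List.ofFn x) with hQdef
  have hQ0 : 0 < Q := hQpos x hx
  have hQ1 : Q ≤ 1 := hQle1 x hx
  -- norm computation
  have hnorm : ‖(∏ i : Fin (n+2), ((x i : ℂ) ^ (a (i.1+1) - 1) *
      ((1 - x i : ℝ) : ℂ) ^ (b (i.1+1) - a (i.1+1) - 1))) /
        (((Q : ℝ) : ℂ) ^ (a 0))‖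
      = (∏ i : Fin (n+2), (x i) ^ (α i - 1) * (1 - x i) ^ (β i - 1)) / Q ^ c := by
    rw [norm_div, norm_prod]
    congr 1
    · refine Finset.prod_congr rfl fun i _ => ?_
      rw [norm_mul,
        Complex.norm_cpow_eq_rpow_re_of_pos (ht0 i),
        Complex.norm_cpow_eq_rpow_re_of_pos (ht1' i)]
      simp [hαdef, hβdef, Complex.sub_re]
    · rw [Complex.norm_cpow_eq_rpow_re_of_pos hQ0]
  rw [hnorm]
  -- the dominating function at x
  have hfac : ∀ i : Fin (n+2), (Set.Ioo (0:ℝ) 1).indicator (h i) (x i)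
      = ((x i) ^ (α i - 1) * (1 - x i) ^ (β i - 1)) /
        ((x i) ^ (ε*d) * (1 - x i) ^ (e i)) := by
    intro i
    rw [Set.indicator_of_mem (ht i), hhdef]
    simp only
    rw [show p i - 1 = (α i - 1) - ε*d by simp [hpdef]; ring,
      show q i - 1 = (β i - 1) - e i by simp [hqdef]; ring,
      Real.rpow_sub (ht0 i), Real.rpow_sub (ht1' i)]
    ring
  have hgx : g x = (∏ i : Fin (n+2), (x i) ^ (α i - 1) * (1 - x i) ^ (β i - 1)) /
      ((∏ i : Fin (n+2), (x i) ^ (ε*d)) * (∏ i : Fin (n+2), (1 - x i) ^ (e i))) := by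
    simp only [hgdef]
    rw [Finset.prod_congr rfl fun i _ => hfac i, Finset.prod_div_distrib]
    congr 1
    exact Finset.prod_mul_distrib
  rw [hgx]
  -- compare denominators
  have hA0 : 0 ≤ ∏ i : Fin (n+2), (x i) ^ (α i - 1) * (1 - x i) ^ (β i - 1) :=
    Finset.prod_nonneg fun i _ => mul_nonneg (Real.rpow_nonneg (ht0 i).le _)
      (Real.rpow_nonneg (ht1' i).le _)
  have hW0 : 0 < (∏ i : Fin (n+2), (x i) ^ (ε*d)) * (∏ i : Fin (n+2), (1 - x i) ^ (e i)) :=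
    mul_pos (Finset.prod_pos fun i _ => Real.rpow_pos_of_pos (ht0 i) _)
      (Finset.prod_pos fun i _ => Real.rpow_pos_of_pos (ht1' i) _)
  refine div_le_div_of_nonneg_left hA0 hW0 ?_
  -- key inequality : W ≤ Q^c
  have hQc : Q ^ d ≤ Q ^ c := Real.rpow_le_rpow_of_exponent_ge hQ0 hQ1 hcd
  refine le_trans ?_ hQc
  have hQdd : Q ^ ((1-ε)*d) * Q ^ (ε*d) = Q ^ d := by
    rw [← Real.rpow_add hQ0]; congr 1; ring
  rw [← hQdd]
  -- split the (1 - x i) product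
  have hsplit : (∏ i : Fin (n+2), (1 - x i) ^ (e i))
      = (1 - x 0) ^ ((1-ε)*d) * ∏ i : Fin (n+1), (1 - x i.succ) ^ (ε*d) := by
    rw [Fin.prod_univ_succ]
    have e0 : e 0 = (1-ε)*d := by simp [hedef]
    have es : ∀ i : Fin (n+1), e i.succ = ε*d := fun i => by simp [hedef, Fin.succ_ne_zero i]
    rw [e0]
    exact congrArg _ (Finset.prod_congr rfl fun i _ => by rw [es i])
  rw [hsplit]
  have hb1 : (1 - x 0) ^ ((1-ε)*d) ≤ Q ^ ((1-ε)*d) :=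
    Real.rpow_le_rpow (ht1' 0).le (hQlb x hx) h1εd0
  have hb2 : (∏ i : Fin (n+2), (x i) ^ (ε*d)) * (∏ i : Fin (n+1), (1 - x i.succ) ^ (ε*d))
      ≤ Q ^ (ε*d) := by
    rw [Real.finset_prod_rpow _ _ (fun i _ => (ht0 i).le),
      Real.finset_prod_rpow _ _ (fun i _ => (ht1' i.succ).le),
      ← Real.mul_rpow (Finset.prod_nonneg fun i _ => (ht0 i).le)
        (Finset.prod_nonneg fun i _ => (ht1' i.succ).le)]
    refine Real.rpow_le_rpow (mul_nonneg (Finset.prod_nonneg fun i _ => (ht0 i).le)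
      (Finset.prod_nonneg fun i _ => (ht1' i.succ).le)) ?_ hεd0
    -- base ≤ Q
    have hQP : x 0 * x 1 *
        ((List.ofFn fun i : Fin n => x i.succ.succ).map (fun u => 1 - u)).prod
        ≤ Q := by
      have hIcc : ∀ u ∈ (List.ofFn fun i : Fin n => x i.succ.succ), u ∈ Set.Icc (0:ℝ) 1 := by
        intro u hu
        rw [List.mem_ofFn] at hu
        obtain ⟨i, rfl⟩ := hu
        exact ⟨(ht0 _).le, (ht1 _).le⟩
      have := nestR_ge_key (s := x 0) (t := x 1)
        ⟨(ht0 0).le, (ht1 0).le⟩ ⟨(ht0 1).le, (ht1 1).le⟩ hIcc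
      rw [hQdef]
      calc x 0 * x 1 * ((List.ofFn fun i : Fin n => x i.succ.succ).map fun u => 1 - u).prod
          ≤ nestR (x 0 :: x 1 :: List.ofFn fun i : Fin n => x i.succ.succ) := this
        _ = nestR (List.ofFn x) := by
            congr 1
            rw [List.ofFn_succ, List.ofFn_succ]
            simp [Fin.succ_zero_eq_one]
    have hPprod : ((List.ofFn fun i : Fin n => x i.succ.succ).map (fun u => 1 - u)).prod
        = ∏ i : Fin n, (1 - x i.succ.succ) := by
      rw [List.map_ofFn, List.prod_ofFn]
      rfl
    rw [hPprod] at hQP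
    -- expand the products
    rw [Fin.prod_univ_succ (f := fun i : Fin (n+2) => x i),
      Fin.prod_univ_succ (f := fun i : Fin (n+1) => x i.succ),
      Fin.prod_univ_succ (f := fun i : Fin (n+1) => 1 - x i.succ)]
    have e1 : (0 : Fin (n+1)).succ = (1 : Fin (n+2)) := Fin.succ_zero_eq_one
    rw [e1]
    have hxp1 : ∏ i : Fin n, x i.succ.succ ≤ 1 :=
      Finset.prod_le_one (fun i _ => (ht0 _).le) (fun i _ => (ht1 _).le)
    have hxp0 : 0 ≤ ∏ i : Fin n, x i.succ.succ :=
      Finset.prod_nonneg fun i _ => (ht0 _).le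
    have h1xp1 : ∏ i : Fin n, (1 - x i.succ.succ) ≤ 1 :=
      Finset.prod_le_one (fun i _ => (ht1' _).le) (fun i _ => by linarith [ht0 i.succ.succ])
    have h1xp0 : 0 ≤ ∏ i : Fin n, (1 - x i.succ.succ) :=
      Finset.prod_nonneg fun i _ => (ht1' _).le
    have hB0 : 0 ≤ x 0 * x 1 * ∏ i : Fin n, (1 - x i.succ.succ) :=
      mul_nonneg (mul_nonneg (ht0 0).le (ht0 1).le) h1xp0
    have hkey : (x 0 * x 1 * ∏ i : Fin n, (1 - x i.succ.succ)) *
        ((∏ i : Fin n, x i.succ.succ) * (1 - x 1))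
        ≤ (x 0 * x 1 * ∏ i : Fin n, (1 - x i.succ.succ)) * 1 :=
      mul_le_mul_of_nonneg_left
        (mul_le_one₀ hxp1 (ht1' 1).le (by linarith [ht0 1])) hB0
    nlinarith [hkey, hQP]
  calc (∏ i : Fin (n+2), (x i) ^ (ε*d)) *
      ((1 - x 0) ^ ((1-ε)*d) * ∏ i : Fin (n+1), (1 - x i.succ) ^ (ε*d))
      = (1 - x 0) ^ ((1-ε)*d) *
        ((∏ i : Fin (n+2), (x i) ^ (ε*d)) * (∏ i : Fin (n+1), (1 - x i.succ) ^ (ε*d))) := by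
        ring
    _ ≤ Q ^ ((1-ε)*d) * Q ^ (ε*d) := by
        refine mul_le_mul hb1 hb2 ?_ (Real.rpow_nonneg hQ0.le _)
        exact mul_nonneg (Finset.prod_nonneg fun i _ => (Real.rpow_nonneg (ht0 i).le _))
          (Finset.prod_nonneg fun i _ => (Real.rpow_nonneg (ht1' i.succ).le _))
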